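/- arXiv:1902.01184 — 2 statements merged into one kernel-verified Lean document; each statement's English description precedes it below -/
import Mathlib

section
/- Let N, M ≥ 2 be integers, P > 0, α > 0, and let I(θ) be the 4×4 Fisher information matrix with entries [I(θ)]_{jk} = 2 Re Σ_{n=0}^{N−1} Σ_{m=0}^{M−1} conj(∂s_{n,m}/∂θ_j)·(∂s_{n,m}/∂θ_k), where s_{n,m}(θ) = √P·α·exp(i(φ + 2πnf − 2πmt)) and θ = (α, φ, f, t). Then I(θ) is invertible and the (f,f) diagonal entry of its inverse, i.e., the Cramér-Rao lower bound on the variance of any unbiased estimator of the normalized Doppler f, equals [I(θ)⁻¹]_{ff} = 6 / ((2π)² α² P · M N (N² − 1)). -/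
open Real Finset

/-- The noiseless OFDM radar observation `s_{n,m}(α,φ,f,t) = √P·α·exp(i(φ + 2πnf − 2πmt))`. -/
noncomputable def ofdmSig (P : ℝ) (α φ f t : ℝ) (n m : ℕ) : ℂ :=
  (Real.sqrt P : ℂ) * (α : ℂ) *
    Complex.exp (Complex.I * ((φ : ℂ) + 2 * (π : ℂ) * (n : ℂ) * (f : ℂ)
      - 2 * (π : ℂ) * (m : ℂ) * (t : ℂ)))

/-- Partial derivative of `s_{n,m}` with respect to the `j`-th parameter of
`θ = (α, φ, f, t)`. -/
noncomputable def ofdmDs (P : ℝ) (α φ f t : ℝ) (j : Fin 4) (n m : ℕ) : ℂ :=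
  match j with
  | 0 => deriv (fun a : ℝ => ofdmSig P a φ f t n m) α
  | 1 => deriv (fun p : ℝ => ofdmSig P α p f t n m) φ
  | 2 => deriv (fun fr : ℝ => ofdmSig P α φ fr t n m) f
  | 3 => deriv (fun ti : ℝ => ofdmSig P α φ f ti n m) t

/-- The 4×4 Fisher information matrix
`[I(θ)]_{jk} = 2 Re Σ_{n,m} conj(∂s_{n,m}/∂θ_j)·(∂s_{n,m}/∂θ_k)`. -/
noncomputable def ofdmFisher (N M : ℕ) (P : ℝ) (α φ f t : ℝ) :
    Matrix (Fin 4) (Fin 4) ℝ :=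
  Matrix.of fun j k =>
    2 * (∑ n ∈ Finset.range N, ∑ m ∈ Finset.range M,
      (starRingEnd ℂ) (ofdmDs P α φ f t j n m) * ofdmDs P α φ f t k n m).re

noncomputable def ofdmCoef (P α : ℝ) (j : Fin 4) (n m : ℕ) : ℂ :=
  match j with
  | 0 => (Real.sqrt P : ℂ)
  | 1 => (Real.sqrt P : ℂ) * α * Complex.I
  | 2 => (Real.sqrt P : ℂ) * α * (2*(π:ℂ)*n) * Complex.I
  | 3 => -((Real.sqrt P : ℂ) * α * (2*(π:ℂ)*m) * Complex.I)

lemma hasDerivAt_ofReal' (x : ℝ) : HasDerivAt (fun a : ℝ => (a:ℂ)) 1 x := by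
  simpa using (hasDerivAt_id x).ofReal_comp

lemma ofdmDs_eq (P α φ f t : ℝ) (j : Fin 4) (n m : ℕ) :
    ofdmDs P α φ f t j n m = ofdmCoef P α j n m *
      Complex.exp (Complex.I * ((φ : ℂ) + 2 * (π : ℂ) * (n : ℂ) * (f : ℂ)
        - 2 * (π : ℂ) * (m : ℂ) * (t : ℂ))) := by
  fin_cases j
  · have h := ((hasDerivAt_ofReal' α).const_mul ((Real.sqrt P : ℂ))).mul_const
      (Complex.exp (Complex.I * ((φ : ℂ) + 2 * (π : ℂ) * (n : ℂ) * (f : ℂ)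
        - 2 * (π : ℂ) * (m : ℂ) * (t : ℂ))))
    show deriv (fun a : ℝ => (Real.sqrt P : ℂ) * (a : ℂ) *
        Complex.exp (Complex.I * ((φ : ℂ) + 2 * (π : ℂ) * (n : ℂ) * (f : ℂ)
        - 2 * (π : ℂ) * (m : ℂ) * (t : ℂ)))) α = (Real.sqrt P : ℂ) * _
    rw [h.deriv]; ring
  · have h1 := (((hasDerivAt_ofReal' φ).add_const
        (2 * (π : ℂ) * (n : ℂ) * (f : ℂ))).sub_const
        (2 * (π : ℂ) * (m : ℂ) * (t : ℂ))).const_mul Complex.I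
    have h := (h1.cexp).const_mul ((Real.sqrt P : ℂ) * (α:ℂ))
    show deriv (fun p : ℝ => (Real.sqrt P : ℂ) * (α : ℂ) *
        Complex.exp (Complex.I * ((p : ℂ) + 2 * (π : ℂ) * (n : ℂ) * (f : ℂ)
        - 2 * (π : ℂ) * (m : ℂ) * (t : ℂ)))) φ = (Real.sqrt P : ℂ) * (α:ℂ) * Complex.I * _
    rw [h.deriv]; ring
  · have h1 := ((((hasDerivAt_ofReal' f).const_mul
        (2 * (π : ℂ) * (n : ℂ))).const_add (φ:ℂ)).sub_const
        (2 * (π : ℂ) * (m : ℂ) * (t : ℂ))).const_mul Complex.I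
    have h := (h1.cexp).const_mul ((Real.sqrt P : ℂ) * (α:ℂ))
    show deriv (fun fr : ℝ => (Real.sqrt P : ℂ) * (α : ℂ) *
        Complex.exp (Complex.I * ((φ : ℂ) + 2 * (π : ℂ) * (n : ℂ) * (fr : ℂ)
        - 2 * (π : ℂ) * (m : ℂ) * (t : ℂ)))) f
      = (Real.sqrt P : ℂ) * (α:ℂ) * (2*(π:ℂ)*(n:ℂ)) * Complex.I * _
    rw [h.deriv]; ring
  · have h1 := (((hasDerivAt_ofReal' t).const_mul (2 * (π : ℂ) * (m : ℂ))).const_sub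
        ((φ:ℂ) + 2 * (π : ℂ) * (n : ℂ) * (f : ℂ))).const_mul Complex.I
    have h := (h1.cexp).const_mul ((Real.sqrt P : ℂ) * (α:ℂ))
    show deriv (fun ti : ℝ => (Real.sqrt P : ℂ) * (α : ℂ) *
        Complex.exp (Complex.I * ((φ : ℂ) + 2 * (π : ℂ) * (n : ℂ) * (f : ℂ)
        - 2 * (π : ℂ) * (m : ℂ) * (ti : ℂ)))) t
      = -((Real.sqrt P : ℂ) * (α:ℂ) * (2*(π:ℂ)*(m:ℂ)) * Complex.I) * _
    rw [h.deriv]; ring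

lemma sum_range_cast (N : ℕ) : ∑ n ∈ Finset.range N, (n:ℝ) = N*(N-1)/2 := by
  induction N with
  | zero => simp
  | succ k ih => rw [Finset.sum_range_succ, ih]; push_cast; ring

lemma sum_range_sq_cast (N : ℕ) : ∑ n ∈ Finset.range N, (n:ℝ)^2 = N*(N-1)*(2*N-1)/6 := by
  induction N with
  | zero => simp
  | succ k ih => rw [Finset.sum_range_succ, ih]; push_cast; ring

lemma conj_ds_mul (P α φ f t : ℝ) (j k : Fin 4) (n m : ℕ) :
    (starRingEnd ℂ) (ofdmDs P α φ f t j n m) * ofdmDs P α φ f t k n m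
      = (starRingEnd ℂ) (ofdmCoef P α j n m) * ofdmCoef P α k n m := by
  set ψ : ℂ := (φ : ℂ) + 2 * (π : ℂ) * (n : ℂ) * (f : ℂ) - 2 * (π : ℂ) * (m : ℂ) * (t : ℂ) with hψ
  have hE : (starRingEnd ℂ) (Complex.exp (Complex.I * ψ)) * Complex.exp (Complex.I * ψ) = 1 := by
    rw [← Complex.exp_conj, ← Complex.exp_add]
    have : (starRingEnd ℂ) (Complex.I * ψ) = -(Complex.I * ψ) := by
      simp [hψ, map_mul, map_add, map_sub, Complex.conj_ofReal, map_ofNat]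
    rw [this, neg_add_cancel, Complex.exp_zero]
  rw [ofdmDs_eq, ofdmDs_eq, map_mul]
  calc (starRingEnd ℂ) (ofdmCoef P α j n m) * (starRingEnd ℂ) (Complex.exp (Complex.I * ψ)) *
        (ofdmCoef P α k n m * Complex.exp (Complex.I * ψ))
      = (starRingEnd ℂ) (ofdmCoef P α j n m) * ofdmCoef P α k n m *
        ((starRingEnd ℂ) (Complex.exp (Complex.I * ψ)) * Complex.exp (Complex.I * ψ)) := by ring
    _ = _ := by rw [hE, mul_one]

noncomputable def ofdmR (P α : ℝ) (n m : ℕ) : Matrix (Fin 4) (Fin 4) ℝ :=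
  !![P, 0, 0, 0;
     0, P*α^2, P*α^2*(2*π*n), -(P*α^2*(2*π*m));
     0, P*α^2*(2*π*n), P*α^2*(2*π*n)^2, -(P*α^2*(2*π*n)*(2*π*m));
     0, -(P*α^2*(2*π*m)), -(P*α^2*(2*π*n)*(2*π*m)), P*α^2*(2*π*m)^2]

lemma coef_re (P α : ℝ) (hP : 0 ≤ P) (j k : Fin 4) (n m : ℕ) :
    ((starRingEnd ℂ) (ofdmCoef P α j n m) * ofdmCoef P α k n m).re = ofdmR P α n m j k := by
  obtain ⟨s, hs0, rfl⟩ : ∃ s : ℝ, 0 ≤ s ∧ s ^ 2 = P :=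
    ⟨Real.sqrt P, Real.sqrt_nonneg P, Real.sq_sqrt hP⟩
  fin_cases j <;> fin_cases k <;>
    simp [ofdmCoef, ofdmR, map_mul, Complex.conj_I, Complex.conj_ofReal,
      Complex.mul_re, Complex.mul_im, Real.sqrt_sq hs0,
      Matrix.vecHead, Matrix.vecTail] <;> ring

lemma dsum_eq (N M : ℕ) (F : ℕ → ℕ → ℝ) (g h : ℕ → ℝ)
    (hF : ∀ n m, F n m = g n * h m) :
    ∑ n ∈ Finset.range N, ∑ m ∈ Finset.range M, F n m
      = (∑ n ∈ Finset.range N, g n) * (∑ m ∈ Finset.range M, h m) := by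
  simp_rw [hF]
  rw [Finset.sum_mul_sum]

noncomputable def ofdmE (N M : ℕ) (P α : ℝ) : Matrix (Fin 4) (Fin 4) ℝ :=
  !![2*P*((N:ℝ)*(M:ℝ)), 0, 0, 0;
     0, 2*P*α^2*((N:ℝ)*(M:ℝ)),
        2*P*α^2*(2*π)*((N:ℝ)*((N:ℝ)-1)/2)*(M:ℝ),
        -(2*P*α^2*(2*π)*((M:ℝ)*((M:ℝ)-1)/2)*(N:ℝ));
     0, 2*P*α^2*(2*π)*((N:ℝ)*((N:ℝ)-1)/2)*(M:ℝ),
        2*P*α^2*(2*π)^2*((N:ℝ)*((N:ℝ)-1)*(2*(N:ℝ)-1)/6)*(M:ℝ),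
        -(2*P*α^2*(2*π)^2*((N:ℝ)*((N:ℝ)-1)/2)*((M:ℝ)*((M:ℝ)-1)/2));
     0, -(2*P*α^2*(2*π)*((M:ℝ)*((M:ℝ)-1)/2)*(N:ℝ)),
        -(2*P*α^2*(2*π)^2*((N:ℝ)*((N:ℝ)-1)/2)*((M:ℝ)*((M:ℝ)-1)/2)),
        2*P*α^2*(2*π)^2*((M:ℝ)*((M:ℝ)-1)*(2*(M:ℝ)-1)/6)*(N:ℝ)]

lemma fisher_eq (N M : ℕ) (P α φ f t : ℝ) (hP : 0 ≤ P) :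
    ofdmFisher N M P α φ f t = ofdmE N M P α := by
  ext j k
  have h1 : (∑ n ∈ Finset.range N, ∑ m ∈ Finset.range M,
      (starRingEnd ℂ) (ofdmDs P α φ f t j n m) * ofdmDs P α φ f t k n m).re
      = ∑ n ∈ Finset.range N, ∑ m ∈ Finset.range M, ofdmR P α n m j k := by
    rw [Complex.re_sum]
    refine Finset.sum_congr rfl fun n _ => ?_
    rw [Complex.re_sum]
    exact Finset.sum_congr rfl fun m _ => by rw [conj_ds_mul, coef_re P α hP]
  show 2 * (∑ n ∈ Finset.range N, ∑ m ∈ Finset.range M,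
      (starRingEnd ℂ) (ofdmDs P α φ f t j n m) * ofdmDs P α φ f t k n m).re = _
  rw [h1]
  have hs0 : ∀ (K : ℕ), ∑ _x ∈ Finset.range K, (1:ℝ) = K := by
    intro K; simp
  fin_cases j <;> fin_cases k
  · rw [dsum_eq N M _ (fun _ => P) (fun _ => (1:ℝ))
      (by intro n m; simp [ofdmR, Matrix.vecHead, Matrix.vecTail])]
    simp [ofdmE, hs0, Matrix.vecHead, Matrix.vecTail]; ring
  · simp [ofdmR, ofdmE, Matrix.vecHead, Matrix.vecTail]
  · simp [ofdmR, ofdmE, Matrix.vecHead, Matrix.vecTail]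
  · simp [ofdmR, ofdmE, Matrix.vecHead, Matrix.vecTail]
  · simp [ofdmR, ofdmE, Matrix.vecHead, Matrix.vecTail]
  · rw [dsum_eq N M _ (fun _ => P*α^2) (fun _ => (1:ℝ))
      (by intro n m; simp [ofdmR, Matrix.vecHead, Matrix.vecTail])]
    simp [ofdmE, hs0, Matrix.vecHead, Matrix.vecTail]; ring
  · rw [dsum_eq N M _ (fun n => P*α^2*(2*π)*(n:ℝ)) (fun _ => (1:ℝ))
      (by intro n m; simp [ofdmR, Matrix.vecHead, Matrix.vecTail]; push_cast; ring)]
    rw [← Finset.mul_sum, sum_range_cast, hs0]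
    simp [ofdmE, Matrix.vecHead, Matrix.vecTail]; ring
  · rw [dsum_eq N M _ (fun _ => -(P*α^2*(2*π))) (fun m => (m:ℝ))
      (by intro n m; simp [ofdmR, Matrix.vecHead, Matrix.vecTail]; push_cast; ring)]
    rw [sum_range_cast, Finset.sum_const, Finset.card_range]
    simp [ofdmE, Matrix.vecHead, Matrix.vecTail]; ring
  · simp [ofdmR, ofdmE, Matrix.vecHead, Matrix.vecTail]
  · rw [dsum_eq N M _ (fun n => P*α^2*(2*π)*(n:ℝ)) (fun _ => (1:ℝ))
      (by intro n m; simp [ofdmR, Matrix.vecHead, Matrix.vecTail]; push_cast; ring)]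
    rw [← Finset.mul_sum, sum_range_cast, hs0]
    simp [ofdmE, Matrix.vecHead, Matrix.vecTail]; ring
  · rw [dsum_eq N M _ (fun n => P*α^2*(2*π)^2*(n:ℝ)^2) (fun _ => (1:ℝ))
      (by intro n m; simp [ofdmR, Matrix.vecHead, Matrix.vecTail]; push_cast; ring)]
    rw [← Finset.mul_sum, sum_range_sq_cast, hs0]
    simp [ofdmE, Matrix.vecHead, Matrix.vecTail]; ring
  · rw [dsum_eq N M _ (fun n => (-(P*α^2*(2*π)^2))*(n:ℝ)) (fun m => (m:ℝ))
      (by intro n m; simp [ofdmR, Matrix.vecHead, Matrix.vecTail]; push_cast; ring)]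
    rw [← Finset.mul_sum, sum_range_cast, sum_range_cast]
    simp [ofdmE, Matrix.vecHead, Matrix.vecTail]; ring
  · simp [ofdmR, ofdmE, Matrix.vecHead, Matrix.vecTail]
  · rw [dsum_eq N M _ (fun _ => -(P*α^2*(2*π))) (fun m => (m:ℝ))
      (by intro n m; simp [ofdmR, Matrix.vecHead, Matrix.vecTail]; push_cast; ring)]
    rw [sum_range_cast, Finset.sum_const, Finset.card_range]
    simp [ofdmE, Matrix.vecHead, Matrix.vecTail]; ring
  · rw [dsum_eq N M _ (fun n => (-(P*α^2*(2*π)^2))*(n:ℝ)) (fun m => (m:ℝ))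
      (by intro n m; simp [ofdmR, Matrix.vecHead, Matrix.vecTail]; push_cast; ring)]
    rw [← Finset.mul_sum, sum_range_cast, sum_range_cast]
    simp [ofdmE, Matrix.vecHead, Matrix.vecTail]; ring
  · rw [dsum_eq N M _ (fun _ => P*α^2*(2*π)^2) (fun m => (m:ℝ)^2)
      (by intro n m; simp [ofdmR, Matrix.vecHead, Matrix.vecTail]; push_cast; ring)]
    rw [sum_range_sq_cast, Finset.sum_const, Finset.card_range]
    simp [ofdmE, Matrix.vecHead, Matrix.vecTail]; ring

noncomputable def ofdmJ (N M : ℕ) (P α : ℝ) : Matrix (Fin 4) (Fin 4) ℝ :=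
  !![1/(2*P*(N:ℝ)*(M:ℝ)), 0, 0, 0;
     0, (1 + 3*((M:ℝ)-1)/((M:ℝ)+1) + 3*((N:ℝ)-1)/((N:ℝ)+1))/(2*P*α^2*(N:ℝ)*(M:ℝ)),
        -3/(P*α^2*(2*π)*(M:ℝ)*(N:ℝ)*((N:ℝ)+1)),
        3/(P*α^2*(2*π)*(N:ℝ)*(M:ℝ)*((M:ℝ)+1));
     0, -3/(P*α^2*(2*π)*(M:ℝ)*(N:ℝ)*((N:ℝ)+1)),
        6 / ((2 * π) ^ 2 * α ^ 2 * P * (M:ℝ) * (N:ℝ) * ((N : ℝ) ^ 2 - 1)), 0;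
     0, 3/(P*α^2*(2*π)*(N:ℝ)*(M:ℝ)*((M:ℝ)+1)), 0,
        6 / ((2 * π) ^ 2 * α ^ 2 * P * (N:ℝ) * (M:ℝ) * ((M : ℝ) ^ 2 - 1))]

set_option maxHeartbeats 2000000 in
lemma ofdmE_mul_J (N M : ℕ) (hN : 2 ≤ N) (hM : 2 ≤ M) (P α : ℝ) (hP : 0 < P) (hα : 0 < α) :
    ofdmE N M P α * ofdmJ N M P α = 1 := by
  have hN1 : (1:ℝ) < (N:ℝ) := by exact_mod_cast hN.trans_lt' one_lt_two
  have hM1 : (1:ℝ) < (M:ℝ) := by exact_mod_cast hM.trans_lt' one_lt_two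
  have hN0 : (N:ℝ) ≠ 0 := by positivity
  have hM0 : (M:ℝ) ≠ 0 := by positivity
  have hNp : (N:ℝ) + 1 ≠ 0 := by positivity
  have hMp : (M:ℝ) + 1 ≠ 0 := by positivity
  have hNm : (N:ℝ) - 1 ≠ 0 := by linarith
  have hMm : (M:ℝ) - 1 ≠ 0 := by linarith
  have hNs : (N:ℝ)^2 - 1 ≠ 0 := by nlinarith
  have hMs : (M:ℝ)^2 - 1 ≠ 0 := by nlinarith
  have hπ : π ≠ 0 := Real.pi_ne_zero
  have hP0 : P ≠ 0 := hP.ne'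
  have hα0 : α ≠ 0 := hα.ne'
  ext i j
  fin_cases i <;> fin_cases j <;>
    · simp [Matrix.mul_apply, Fin.sum_univ_four, ofdmE, ofdmJ, Matrix.one_apply,
        Matrix.vecHead, Matrix.vecTail]
      try field_simp
      try ring

/-- Cramér-Rao lower bound for the normalized Doppler shift `f` in OFDM radar with
constant envelope `A_{n,m} = √P`: the Fisher information matrix is invertible and
`[I(θ)⁻¹]_{ff} = 6 / ((2π)² α² P · M N (N² − 1))`. -/
theorem ofdm_crlb_doppler
    (N M : ℕ) (hN : 2 ≤ N) (hM : 2 ≤ M) (P : ℝ) (hP : 0 < P)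
    (α φ f t : ℝ) (hα : 0 < α) :
    IsUnit (ofdmFisher N M P α φ f t).det ∧
    (ofdmFisher N M P α φ f t)⁻¹ 2 2 =
      6 / ((2 * π) ^ 2 * α ^ 2 * P * M * N * ((N : ℝ) ^ 2 - 1)) := by
  have hfe : ofdmFisher N M P α φ f t = ofdmE N M P α := fisher_eq N M P α φ f t hP.le
  have hmul : ofdmFisher N M P α φ f t * ofdmJ N M P α = 1 := by
    rw [hfe]; exact ofdmE_mul_J N M hN hM P α hP hα
  refine ⟨Matrix.isUnit_det_of_right_inverse hmul, ?_⟩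
  rw [Matrix.inv_eq_right_inv hmul]
  simp [ofdmJ, Matrix.vecHead, Matrix.vecTail]
end

section
/- Let N, M ≥ 2 be integers, P > 0, α > 0. With the Fisher information matrix I(θ) defined entrywise by [I(θ)]_{jk} = 2 Re Σ_{n=0}^{N−1} Σ_{m=0}^{M−1} conj(∂s_{n,m}/∂θ_j)·(∂s_{n,m}/∂θ_k) for s_{n,m}(θ) = √P·α·exp(i(φ + 2πnf − 2πmt)) and θ = (α, φ, f, t), the 2×2 block B = [[I_{φφ}, I_{φt}],[I_{tφ}, I_{tt}]] is invertible, and the Schur complement of the (f,f) entry with respect to the nuisance parameters (φ, t), namely I_{ff} − (I_{fφ}, I_{ft}) B⁻¹ (I_{φf}, I_{tf})ᵀ, equals (2π)² P α² M N (N² − 1) / 6. -/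
open Real Finset

/-! ### Auxiliary lemmas -/

lemma ofdm_ds1 (P α φ f t : ℝ) (n m : ℕ) :
    ofdmDs P α φ f t 1 n m = ((1 : ℝ) : ℂ) * (Complex.I * ofdmSig P α φ f t n m) := by
  have h : HasDerivAt (fun p : ℝ => ofdmSig P α p f t n m)
      ((Real.sqrt P : ℂ) * (α : ℂ) *
        (Complex.exp (Complex.I * ((φ : ℂ) + 2 * (π : ℂ) * (n : ℂ) * (f : ℂ)
          - 2 * (π : ℂ) * (m : ℂ) * (t : ℂ))) * (Complex.I * 1))) φ := by
    unfold ofdmSig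
    exact ((((Complex.ofRealCLM.hasDerivAt.add_const
      (2 * (π : ℂ) * (n : ℂ) * (f : ℂ))).sub_const
      (2 * (π : ℂ) * (m : ℂ) * (t : ℂ))).const_mul Complex.I).cexp).const_mul _
  rw [show ofdmDs P α φ f t 1 n m
      = deriv (fun p : ℝ => ofdmSig P α p f t n m) φ from rfl, h.deriv]
  unfold ofdmSig; push_cast; ring

lemma ofdm_ds2 (P α φ f t : ℝ) (n m : ℕ) :
    ofdmDs P α φ f t 2 n m
      = ((2 * π * n : ℝ) : ℂ) * (Complex.I * ofdmSig P α φ f t n m) := by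
  have h : HasDerivAt (fun fr : ℝ => ofdmSig P α φ fr t n m)
      ((Real.sqrt P : ℂ) * (α : ℂ) *
        (Complex.exp (Complex.I * ((φ : ℂ) + 2 * (π : ℂ) * (n : ℂ) * (f : ℂ)
          - 2 * (π : ℂ) * (m : ℂ) * (t : ℂ))) *
          (Complex.I * (2 * (π : ℂ) * (n : ℂ) * 1)))) f := by
    unfold ofdmSig
    exact (((((Complex.ofRealCLM.hasDerivAt.const_mul
      (2 * (π : ℂ) * (n : ℂ))).const_add (φ : ℂ)).sub_const
      (2 * (π : ℂ) * (m : ℂ) * (t : ℂ))).const_mul Complex.I).cexp).const_mul _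
  rw [show ofdmDs P α φ f t 2 n m
      = deriv (fun fr : ℝ => ofdmSig P α φ fr t n m) f from rfl, h.deriv]
  unfold ofdmSig; push_cast; ring

lemma ofdm_ds3 (P α φ f t : ℝ) (n m : ℕ) :
    ofdmDs P α φ f t 3 n m
      = ((-(2 * π * m) : ℝ) : ℂ) * (Complex.I * ofdmSig P α φ f t n m) := by
  have h : HasDerivAt (fun ti : ℝ => ofdmSig P α φ f ti n m)
      ((Real.sqrt P : ℂ) * (α : ℂ) *
        (Complex.exp (Complex.I * ((φ : ℂ) + 2 * (π : ℂ) * (n : ℂ) * (f : ℂ)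
          - 2 * (π : ℂ) * (m : ℂ) * (t : ℂ))) *
          (Complex.I * (-(2 * (π : ℂ) * (m : ℂ) * 1))))) t := by
    unfold ofdmSig
    exact ((((Complex.ofRealCLM.hasDerivAt.const_mul
      (2 * (π : ℂ) * (m : ℂ))).const_sub
      ((φ : ℂ) + 2 * (π : ℂ) * (n : ℂ) * (f : ℂ))).const_mul Complex.I).cexp.const_mul _)
  rw [show ofdmDs P α φ f t 3 n m
      = deriv (fun ti : ℝ => ofdmSig P α φ f ti n m) t from rfl, h.deriv]
  unfold ofdmSig; push_cast; ring

lemma ofdm_hsig (P : ℝ) (hP : 0 ≤ P) (α φ f t : ℝ) (n m : ℕ) :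
    (starRingEnd ℂ) (ofdmSig P α φ f t n m) * ofdmSig P α φ f t n m
      = ((P * α ^ 2 : ℝ) : ℂ) := by
  unfold ofdmSig
  have hw : ((φ : ℂ) + 2 * (π : ℂ) * (n : ℂ) * (f : ℂ)
      - 2 * (π : ℂ) * (m : ℂ) * (t : ℂ)) =
      ((φ + 2 * π * n * f - 2 * π * m * t : ℝ) : ℂ) := by push_cast; ring
  rw [hw]
  set r : ℝ := φ + 2 * π * n * f - 2 * π * m * t
  have hE : (starRingEnd ℂ) (Complex.exp (Complex.I * (r : ℂ))) *
      Complex.exp (Complex.I * (r : ℂ)) = 1 := by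
    rw [← Complex.exp_conj, ← Complex.exp_add]
    simp [Complex.conj_I]
  simp only [map_mul, Complex.conj_ofReal]
  rw [show ((Real.sqrt P : ℂ) * (α:ℂ) * (starRingEnd ℂ) (Complex.exp (Complex.I * (r:ℂ)))) *
      ((Real.sqrt P : ℂ) * (α:ℂ) * Complex.exp (Complex.I * (r:ℂ)))
    = ((Real.sqrt P : ℂ) * (Real.sqrt P : ℂ)) * ((α:ℂ)*(α:ℂ)) *
      ((starRingEnd ℂ) (Complex.exp (Complex.I * (r:ℂ))) * Complex.exp (Complex.I * (r:ℂ))) by ring,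
    hE]
  rw [show ((Real.sqrt P : ℂ) * (Real.sqrt P : ℂ)) = ((P:ℝ):ℂ) by
    rw [← Complex.ofReal_mul, Real.mul_self_sqrt hP]]
  push_cast; ring

lemma ofdm_prodIs (P : ℝ) (hP : 0 ≤ P) (α φ f t : ℝ) (n m : ℕ) (a b : ℝ) :
    (starRingEnd ℂ) ((a : ℂ) * (Complex.I * ofdmSig P α φ f t n m)) *
      ((b : ℂ) * (Complex.I * ofdmSig P α φ f t n m))
      = ((a * b * (P * α ^ 2) : ℝ) : ℂ) := by
  simp only [map_mul, Complex.conj_ofReal, Complex.conj_I]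
  rw [show ((a:ℂ) * (-Complex.I * (starRingEnd ℂ) (ofdmSig P α φ f t n m))) *
      ((b:ℂ) * (Complex.I * ofdmSig P α φ f t n m))
    = (a:ℂ)*(b:ℂ) * (-(Complex.I*Complex.I)) *
      ((starRingEnd ℂ) (ofdmSig P α φ f t n m) * ofdmSig P α φ f t n m) by ring,
    ofdm_hsig P hP, Complex.I_mul_I]
  push_cast; ring

lemma ofdm_entry (N M : ℕ) (P : ℝ) (hP : 0 ≤ P) (α φ f t : ℝ) (j k : Fin 4)
    (a b : ℕ → ℕ → ℝ)
    (hj : ∀ n m, ofdmDs P α φ f t j n m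
      = ((a n m : ℝ) : ℂ) * (Complex.I * ofdmSig P α φ f t n m))
    (hk : ∀ n m, ofdmDs P α φ f t k n m
      = ((b n m : ℝ) : ℂ) * (Complex.I * ofdmSig P α φ f t n m)) :
    ofdmFisher N M P α φ f t j k
      = 2 * (P * α ^ 2) * ∑ n ∈ range N, ∑ m ∈ range M, a n m * b n m := by
  unfold ofdmFisher
  simp only [Matrix.of_apply, hj, hk, ofdm_prodIs P hP]
  rw [show (∑ n ∈ range N, ∑ m ∈ range M, ((a n m * b n m * (P * α ^ 2) : ℝ) : ℂ))
      = (((∑ n ∈ range N, ∑ m ∈ range M, a n m * b n m * (P * α ^ 2) : ℝ)) : ℂ) by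
    push_cast; rfl]
  rw [Complex.ofReal_re]
  simp only [← Finset.sum_mul]
  ring

lemma sum_id_real (N : ℕ) : ∑ n ∈ range N, (n : ℝ) = N * (N - 1) / 2 := by
  induction N with
  | zero => simp
  | succ k ih => rw [sum_range_succ, ih]; push_cast; ring

lemma sum_sq_real (N : ℕ) :
    ∑ n ∈ range N, (n : ℝ) ^ 2 = N * (N - 1) * (2 * N - 1) / 6 := by
  induction N with
  | zero => simp
  | succ k ih => rw [sum_range_succ, ih]; push_cast; ring

lemma ofdm_dsum (N M : ℕ) (g h : ℕ → ℝ) :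
    ∑ n ∈ range N, ∑ m ∈ range M, g n * h m =
      (∑ n ∈ range N, g n) * (∑ m ∈ range M, h m) :=
  (Finset.sum_mul_sum _ _ _ _).symm

lemma ofdm_inv_fin_two (a b c d : ℝ) :
    (!![a, b; c, d])⁻¹ = (a * d - b * c)⁻¹ • !![d, -b; -c, a] := by
  have hdet : (!![a, b; c, d]).det = a * d - b * c := by
    simp [Matrix.det_fin_two_of]
  rw [Matrix.inv_def, Matrix.adjugate_fin_two_of, hdet, Ring.inverse_eq_inv]

lemma ofdm_schur_scalar (a b c d u v w x y : ℝ) (h : a * d - b * c ≠ 0) :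
    w - dotProduct ![x, y] ((!![a, b; c, d])⁻¹.mulVec ![u, v]) =
      w - (x * (d * u - b * v) + y * (a * v - c * u)) / (a * d - b * c) := by
  rw [ofdm_inv_fin_two]
  simp only [Matrix.mulVec, dotProduct, Fin.sum_univ_two, Matrix.smul_apply,
    smul_eq_mul, Matrix.cons_val', Matrix.cons_val_zero, Matrix.cons_val_one,
    Matrix.head_cons, Matrix.empty_val', Matrix.cons_val_fin_one, Matrix.head_fin_const,
    Matrix.of_apply]
  field_simp
  ring

lemma ofdm_sub_div_eq (w r x D : ℝ) (hD : D ≠ 0) (h : x = (w - r) * D) :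
    w - x / D = r := by
  rw [h, mul_div_cancel_right₀ _ hD]; ring

/-- Effective Fisher information for the normalized Doppler `f` after eliminating
the nuisance parameters `(φ, t)`: the 2×2 nuisance block is invertible and the
Schur complement of the `(f,f)` entry equals `(2π)² P α² M N (N² − 1) / 6`. -/
theorem ofdm_schur_complement_doppler
    (N M : ℕ) (hN : 2 ≤ N) (hM : 2 ≤ M) (P : ℝ) (hP : 0 < P)
    (α φ f t : ℝ) (hα : 0 < α) :
    let Inf := ofdmFisher N M P α φ f t
    let B : Matrix (Fin 2) (Fin 2) ℝ := !![Inf 1 1, Inf 1 3; Inf 3 1, Inf 3 3]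
    IsUnit B.det ∧
    Inf 2 2 - dotProduct ![Inf 2 1, Inf 2 3] (B⁻¹.mulVec ![Inf 1 2, Inf 3 2]) =
      (2 * π) ^ 2 * P * α ^ 2 * M * N * ((N : ℝ) ^ 2 - 1) / 6 := by
  intro Inf B
  set c : ℝ := P * α ^ 2 with hc
  have hc0 : 0 < c := by positivity
  set Sn : ℝ := (N : ℝ) * ((N : ℝ) - 1) / 2 with hSn
  set Sn2 : ℝ := (N : ℝ) * ((N : ℝ) - 1) * (2 * (N : ℝ) - 1) / 6 with hSn2
  set Sm : ℝ := (M : ℝ) * ((M : ℝ) - 1) / 2 with hSm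
  set Sm2 : ℝ := (M : ℝ) * ((M : ℝ) - 1) * (2 * (M : ℝ) - 1) / 6 with hSm2
  have hP' : (0:ℝ) ≤ P := hP.le
  -- entry values
  have h11 : Inf 1 1 = 2 * c * ((N : ℝ) * (M : ℝ)) := by
    rw [show Inf 1 1 = ofdmFisher N M P α φ f t 1 1 from rfl,
      ofdm_entry N M P hP' α φ f t 1 1 (fun _ _ => 1) (fun _ _ => 1)
        (ofdm_ds1 P α φ f t) (ofdm_ds1 P α φ f t)]
    all_goals simp only [mul_one, Finset.sum_const, Finset.card_range, nsmul_eq_mul, hc]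
    all_goals ring
  have h13 : Inf 1 3 = 2 * c * ((N : ℝ) * (-(2 * π) * Sm)) := by
    rw [show Inf 1 3 = ofdmFisher N M P α φ f t 1 3 from rfl,
      ofdm_entry N M P hP' α φ f t 1 3 (fun _ _ => 1) (fun _ m => -(2 * π * m))
        (ofdm_ds1 P α φ f t) (ofdm_ds3 P α φ f t)]
    rw [show (∑ n ∈ range N, ∑ m ∈ range M, (1 : ℝ) * -(2 * π * (m:ℝ)))
        = ∑ n ∈ range N, ∑ m ∈ range M, (1 : ℝ) * (-(2*π) * (m:ℝ)) by
      refine sum_congr rfl fun _ _ => sum_congr rfl fun _ _ => by ring]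
    rw [ofdm_dsum, ← Finset.mul_sum, sum_id_real]
    all_goals simp only [Finset.sum_const, Finset.card_range, nsmul_eq_mul, mul_one, hc, hSm]
    all_goals ring
  have h31 : Inf 3 1 = 2 * c * ((N : ℝ) * (-(2 * π) * Sm)) := by
    rw [show Inf 3 1 = ofdmFisher N M P α φ f t 3 1 from rfl,
      ofdm_entry N M P hP' α φ f t 3 1 (fun _ m => -(2 * π * m)) (fun _ _ => 1)
        (ofdm_ds3 P α φ f t) (ofdm_ds1 P α φ f t)]
    rw [show (∑ n ∈ range N, ∑ m ∈ range M, -(2 * π * (m:ℝ)) * 1)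
        = ∑ n ∈ range N, ∑ m ∈ range M, (1 : ℝ) * (-(2*π) * (m:ℝ)) by
      refine sum_congr rfl fun _ _ => sum_congr rfl fun _ _ => by ring]
    rw [ofdm_dsum, ← Finset.mul_sum, sum_id_real]
    all_goals simp only [Finset.sum_const, Finset.card_range, nsmul_eq_mul, mul_one, hc, hSm]
    all_goals ring
  have h33 : Inf 3 3 = 2 * c * ((N : ℝ) * ((2 * π) ^ 2 * Sm2)) := by
    rw [show Inf 3 3 = ofdmFisher N M P α φ f t 3 3 from rfl,
      ofdm_entry N M P hP' α φ f t 3 3 (fun _ m => -(2 * π * m)) (fun _ m => -(2 * π * m))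
        (ofdm_ds3 P α φ f t) (ofdm_ds3 P α φ f t)]
    rw [show (∑ n ∈ range N, ∑ m ∈ range M, -(2 * π * (m:ℝ)) * -(2 * π * (m:ℝ)))
        = ∑ n ∈ range N, ∑ m ∈ range M, (1 : ℝ) * ((2*π)^2 * (m:ℝ)^2) by
      refine sum_congr rfl fun _ _ => sum_congr rfl fun _ _ => by ring]
    rw [ofdm_dsum, ← Finset.mul_sum, sum_sq_real]
    all_goals simp only [Finset.sum_const, Finset.card_range, nsmul_eq_mul, mul_one, hc, hSm2]
    all_goals ring
  have h22 : Inf 2 2 = 2 * c * ((M : ℝ) * ((2 * π) ^ 2 * Sn2)) := by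
    rw [show Inf 2 2 = ofdmFisher N M P α φ f t 2 2 from rfl,
      ofdm_entry N M P hP' α φ f t 2 2 (fun n _ => 2 * π * n) (fun n _ => 2 * π * n)
        (ofdm_ds2 P α φ f t) (ofdm_ds2 P α φ f t)]
    rw [show (∑ n ∈ range N, ∑ m ∈ range M, (2 * π * (n:ℝ)) * (2 * π * (n:ℝ)))
        = ∑ n ∈ range N, ∑ m ∈ range M, ((2*π)^2 * (n:ℝ)^2) * (1 : ℝ) by
      refine sum_congr rfl fun _ _ => sum_congr rfl fun _ _ => by ring]
    rw [ofdm_dsum, ← Finset.mul_sum, sum_sq_real]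
    all_goals simp only [Finset.sum_const, Finset.card_range, nsmul_eq_mul, mul_one, hc, hSn2]
    all_goals ring
  have h21 : Inf 2 1 = 2 * c * ((M : ℝ) * (2 * π * Sn)) := by
    rw [show Inf 2 1 = ofdmFisher N M P α φ f t 2 1 from rfl,
      ofdm_entry N M P hP' α φ f t 2 1 (fun n _ => 2 * π * n) (fun _ _ => 1)
        (ofdm_ds2 P α φ f t) (ofdm_ds1 P α φ f t)]
    rw [show (∑ n ∈ range N, ∑ m ∈ range M, (2 * π * (n:ℝ)) * 1)
        = ∑ n ∈ range N, ∑ m ∈ range M, (2 * π * (n:ℝ)) * (1 : ℝ) by rfl]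
    rw [ofdm_dsum, ← Finset.mul_sum, sum_id_real]
    all_goals simp only [Finset.sum_const, Finset.card_range, nsmul_eq_mul, mul_one, hc, hSn]
    all_goals ring
  have h12 : Inf 1 2 = 2 * c * ((M : ℝ) * (2 * π * Sn)) := by
    rw [show Inf 1 2 = ofdmFisher N M P α φ f t 1 2 from rfl,
      ofdm_entry N M P hP' α φ f t 1 2 (fun _ _ => 1) (fun n _ => 2 * π * n)
        (ofdm_ds1 P α φ f t) (ofdm_ds2 P α φ f t)]
    rw [show (∑ n ∈ range N, ∑ m ∈ range M, (1 : ℝ) * (2 * π * (n:ℝ)))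
        = ∑ n ∈ range N, ∑ m ∈ range M, (2 * π * (n:ℝ)) * (1 : ℝ) by
      refine sum_congr rfl fun _ _ => sum_congr rfl fun _ _ => by ring]
    rw [ofdm_dsum, ← Finset.mul_sum, sum_id_real]
    all_goals simp only [Finset.sum_const, Finset.card_range, nsmul_eq_mul, mul_one, hc, hSn]
    all_goals ring
  have h23 : Inf 2 3 = 2 * c * (-(2 * π) ^ 2 * Sn * Sm) := by
    rw [show Inf 2 3 = ofdmFisher N M P α φ f t 2 3 from rfl,
      ofdm_entry N M P hP' α φ f t 2 3 (fun n _ => 2 * π * n) (fun _ m => -(2 * π * m))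
        (ofdm_ds2 P α φ f t) (ofdm_ds3 P α φ f t)]
    rw [show (∑ n ∈ range N, ∑ m ∈ range M, (2 * π * (n:ℝ)) * -(2 * π * (m:ℝ)))
        = ∑ n ∈ range N, ∑ m ∈ range M, (-(2*π)^2 * (n:ℝ)) * (m:ℝ) by
      refine sum_congr rfl fun _ _ => sum_congr rfl fun _ _ => by ring]
    rw [ofdm_dsum, ← Finset.mul_sum, sum_id_real, sum_id_real]
    all_goals simp only [Finset.sum_const, Finset.card_range, nsmul_eq_mul, mul_one, hc, hSn, hSm]
    all_goals ring
  have h32 : Inf 3 2 = 2 * c * (-(2 * π) ^ 2 * Sn * Sm) := by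
    rw [show Inf 3 2 = ofdmFisher N M P α φ f t 3 2 from rfl,
      ofdm_entry N M P hP' α φ f t 3 2 (fun _ m => -(2 * π * m)) (fun n _ => 2 * π * n)
        (ofdm_ds3 P α φ f t) (ofdm_ds2 P α φ f t)]
    rw [show (∑ n ∈ range N, ∑ m ∈ range M, -(2 * π * (m:ℝ)) * (2 * π * (n:ℝ)))
        = ∑ n ∈ range N, ∑ m ∈ range M, (-(2*π)^2 * (n:ℝ)) * (m:ℝ) by
      refine sum_congr rfl fun _ _ => sum_congr rfl fun _ _ => by ring]
    rw [ofdm_dsum, ← Finset.mul_sum, sum_id_real, sum_id_real]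
    all_goals simp only [Finset.sum_const, Finset.card_range, nsmul_eq_mul, mul_one, hc, hSn, hSm]
    all_goals ring
  -- determinant
  have hN2 : (2:ℝ) ≤ (N:ℝ) := by exact_mod_cast hN
  have hM2 : (2:ℝ) ≤ (M:ℝ) := by exact_mod_cast hM
  have hdetval : Inf 1 1 * Inf 3 3 - Inf 1 3 * Inf 3 1
      = (2*c)^2 * (2*π)^2 * (N:ℝ)^2 * ((M:ℝ)^2 * ((M:ℝ)-1) * ((M:ℝ)+1) / 12) := by
    rw [h11, h33, h13, h31, hSm, hSm2]; ring
  have hπ : (0:ℝ) < π := Real.pi_pos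
  have hdpos : 0 < Inf 1 1 * Inf 3 3 - Inf 1 3 * Inf 3 1 := by
    rw [hdetval]
    have h1 : (0:ℝ) < (M:ℝ) - 1 := by linarith
    have h2 : (0:ℝ) < (M:ℝ) + 1 := by linarith
    have h3 : (0:ℝ) < (N:ℝ) := by linarith
    have h4 : (0:ℝ) < (M:ℝ) := by linarith
    positivity
  have hdetB : B.det = Inf 1 1 * Inf 3 3 - Inf 1 3 * Inf 3 1 := by
    simp [B, Matrix.det_fin_two_of]
  constructor
  · rw [hdetB]; exact isUnit_iff_ne_zero.mpr hdpos.ne'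
  · rw [show B = !![Inf 1 1, Inf 1 3; Inf 3 1, Inf 3 3] from rfl,
      ofdm_schur_scalar _ _ _ _ _ _ _ _ _ hdpos.ne']
    have hd0 : Inf 1 1 * Inf 3 3 - Inf 1 3 * Inf 3 1 ≠ 0 := hdpos.ne'
    rw [h11, h13, h31, h33] at hd0
    rw [hSm, hSm2, hc] at hd0
    rw [h11, h13, h31, h33, h22, h21, h12, h23, h32]
    rw [hSn, hSn2, hSm, hSm2, hc]
    exact ofdm_sub_div_eq _ _ _ _ hd0 (by ring)
end
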